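/- Let X be a chain and let α, β be orientation-preserving partial transformations of X. Then α and β are J-related in the monoid POP(X) (i.e. there exist λ, γ, δ, ξ ∈ POP(X) with α = λβγ and β = δαξ, composition written left-to-right with the left factor applied first) if and only if there exist injective orientation-preserving partial transformations θ and τ of X with Dom(θ) = Im(α), θ(Im(α)) ⊆ Im(β), Dom(τ) = Im(β), and τ(Im(β)) ⊆ Im(α). -/

import Mathlib

variable {X : Type*}

/-- The partial transformation `f` is order-preserving on the subset `A` of its domain. -/
def IsOrdOn [LinearOrder X] (f : X →. X) (A : Set X) : Prop :=
  ∀ ⦃x y u v : X⦄, x ∈ A → y ∈ A → x ≤ y → u ∈ f x → v ∈ f y → u ≤ v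

/-- `Y` is an ideal of the partial transformation `f`: a nonempty subset of the domain such
that `f` is order-preserving on `Y` and on `Dom f \ Y`, and every element of `Y` is below every
element of `Dom f \ Y` while its image is above. -/
def IsIdeal [LinearOrder X] (f : X →. X) (Y : Set X) : Prop :=
  Y.Nonempty ∧ Y ⊆ f.Dom ∧ IsOrdOn f Y ∧ IsOrdOn f (f.Dom \ Y) ∧
    ∀ ⦃a b u v : X⦄, a ∈ Y → b ∈ f.Dom \ Y → u ∈ f a → v ∈ f b → a ≤ b ∧ v ≤ u

/-- `f` is an orientation-preserving partial transformation: it is the empty transformation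
or it admits an ideal. -/
def IsOP [LinearOrder X] (f : X →. X) : Prop :=
  f.Dom = ∅ ∨ ∃ Y : Set X, IsIdeal f Y

/-- Membership in a composition of partial functions. -/
lemma mem_pcomp {f g : X →. X} {x z : X} :
    z ∈ (g.comp f) x ↔ ∃ y, y ∈ f x ∧ z ∈ g y := by
  simp only [PFun.comp_apply]
  exact Part.mem_bind_iff

/-- If `s` is a partial inverse of an orientation-preserving `f`
(i.e. `x ∈ s y → y ∈ f x`), then `s` is orientation-preserving. -/
lemma isOP_of_subinv [LinearOrder X] {f s : X →. X} (hf : IsOP f)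
    (hs : ∀ ⦃y x : X⦄, x ∈ s y → y ∈ f x) : IsOP s := by
  by_cases hD : s.Dom = ∅
  · exact Or.inl hD
  right
  have hDne : s.Dom.Nonempty := Set.nonempty_iff_ne_empty.2 hD
  rcases hf with hfD | ⟨Y, _, _, ordY, ordC, cross⟩
  · exfalso
    obtain ⟨y0, hy0⟩ := hDne
    obtain ⟨x0, hx0⟩ := (PFun.mem_dom s y0).1 hy0
    have : x0 ∈ f.Dom := (PFun.mem_dom f x0).2 ⟨y0, hs hx0⟩
    rw [hfD] at this; exact this
  have hval : ∀ ⦃y x : X⦄, x ∈ s y → x ∈ f.Dom := fun y x hx =>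
    (PFun.mem_dom f x).2 ⟨y, hs hx⟩
  by_cases hZ : {y | y ∈ s.Dom ∧ ∃ x ∈ s y, x ∈ f.Dom \ Y}.Nonempty
  · refine ⟨_, hZ, fun y hy => hy.1, ?_, ?_, ?_⟩
    · intro y1 y2 u v h1 h2 hle hu hv
      obtain ⟨x1, hx1, hx1'⟩ := h1.2
      obtain ⟨x2, hx2, hx2'⟩ := h2.2
      have hu' : u = x1 := Part.mem_unique hu hx1
      have hv' : v = x2 := Part.mem_unique hv hx2
      subst hu'; subst hv'
      by_contra hnot
      have hvu : v ≤ u := (not_le.mp hnot).le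
      have : y2 ≤ y1 := ordC hx2' hx1' hvu (hs hv) (hs hu)
      have hyy : y1 = y2 := le_antisymm hle this
      subst hyy
      exact hnot (le_of_eq (Part.mem_unique hu hv))
    · intro y1 y2 u v h1 h2 hle hu hv
      have hu' : u ∈ Y := by
        by_contra hmem
        exact h1.2 ⟨h1.1, u, hu, hval hu, hmem⟩
      have hv' : v ∈ Y := by
        by_contra hmem
        exact h2.2 ⟨h2.1, v, hv, hval hv, hmem⟩
      by_contra hnot
      have hvu : v ≤ u := (not_le.mp hnot).le
      have : y2 ≤ y1 := ordY hv' hu' hvu (hs hv) (hs hu)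
      have hyy : y1 = y2 := le_antisymm hle this
      subst hyy
      exact hnot (le_of_eq (Part.mem_unique hu hv))
    · intro a b u v ha hb hu hv
      obtain ⟨x1, hx1, hx1'⟩ := ha.2
      have hu' : u = x1 := Part.mem_unique hu hx1
      subst hu'
      have hv' : v ∈ Y := by
        by_contra hmem
        exact hb.2 ⟨hb.1, v, hv, hval hv, hmem⟩
      obtain ⟨h1, h2⟩ := cross hv' hx1' (hs hv) (hs hu)
      exact ⟨h2, h1⟩
  · have hinY : ∀ ⦃y x : X⦄, x ∈ s y → x ∈ Y := by
      intro y x hx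
      by_contra hmem
      exact hZ ⟨y, (PFun.mem_dom s y).2 ⟨x, hx⟩, x, hx, hval hx, hmem⟩
    refine ⟨s.Dom, hDne, subset_rfl, ?_, ?_, ?_⟩
    · intro y1 y2 u v _ _ hle hu hv
      by_contra hnot
      have hvu : v ≤ u := (not_le.mp hnot).le
      have : y2 ≤ y1 := ordY (hinY hv) (hinY hu) hvu (hs hv) (hs hu)
      have hyy : y1 = y2 := le_antisymm hle this
      subst hyy
      exact hnot (le_of_eq (Part.mem_unique hu hv))
    · intro y1 y2 u v h1 _ _ _ _
      exact absurd h1.1 h1.2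
    · intro a b u v _ hb _ _
      exact absurd hb.1 hb.2

/-- Composition of orientation-preserving partial transformations is
orientation-preserving. -/
lemma isOP_comp [LinearOrder X] {f g : X →. X} (hf : IsOP f) (hg : IsOP g) :
    IsOP (g.comp f) := by
  set h : X →. X := g.comp f with hdef
  by_cases hD : h.Dom = ∅
  · exact Or.inl hD
  have hDne : h.Dom.Nonempty := Set.nonempty_iff_ne_empty.2 hD
  have hmem : ∀ ⦃x z : X⦄, z ∈ h x → ∃ y, y ∈ f x ∧ z ∈ g y := fun x z hz =>
    mem_pcomp.1 hz
  have hdom : ∀ ⦃x : X⦄, x ∈ h.Dom → ∃ y z, y ∈ f x ∧ z ∈ g y ∧ z ∈ h x := by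
    intro x hx
    obtain ⟨z, hz⟩ := (PFun.mem_dom h x).1 hx
    obtain ⟨y, hy, hzy⟩ := hmem hz
    exact ⟨y, z, hy, hzy, hz⟩
  rcases hf with hfD | ⟨Yf, _, Yfsub, fordY, fordC, fcross⟩
  · exfalso
    obtain ⟨x, hx⟩ := hDne
    obtain ⟨y, z, hy, _, _⟩ := hdom hx
    have : x ∈ f.Dom := (PFun.mem_dom f x).2 ⟨y, hy⟩
    rw [hfD] at this; exact this
  rcases hg with hgD | ⟨Yg, _, Ygsub, gordY, gordC, gcross⟩
  · exfalso
    obtain ⟨x, hx⟩ := hDne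
    obtain ⟨y, z, hy, hz, _⟩ := hdom hx
    have : y ∈ g.Dom := (PFun.mem_dom g y).2 ⟨z, hz⟩
    rw [hgD] at this; exact this
  right
  have hfdom : ∀ ⦃x y : X⦄, y ∈ f x → x ∈ f.Dom := fun x y hy =>
    (PFun.mem_dom f x).2 ⟨y, hy⟩
  have hgdom : ∀ ⦃y z : X⦄, z ∈ g y → y ∈ g.Dom := fun y z hz =>
    (PFun.mem_dom g y).2 ⟨z, hz⟩
  set inA : X → Prop := fun x => x ∈ Yf with hinA
  set inP : X → Prop := fun x => ∃ y ∈ f x, y ∈ Yg with hinP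
  -- order preservation of h on each of the four blocks
  have hAA : ∀ ⦃x1 x2 z1 z2 : X⦄, inA x1 → inA x2 → inP x1 → inP x2 →
      x1 ≤ x2 → z1 ∈ h x1 → z2 ∈ h x2 → z1 ≤ z2 := by
    intro x1 x2 z1 z2 a1 a2 p1 p2 hle hz1 hz2
    obtain ⟨y1, hy1, hzy1⟩ := hmem hz1
    obtain ⟨y2, hy2, hzy2⟩ := hmem hz2
    obtain ⟨y1', hy1', hy1Y⟩ := p1
    obtain ⟨y2', hy2', hy2Y⟩ := p2
    rw [Part.mem_unique hy1 hy1'] at hzy1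
    rw [Part.mem_unique hy2 hy2'] at hzy2
    exact gordY hy1Y hy2Y (fordY a1 a2 hle hy1' hy2') hzy1 hzy2
  have hCC : ∀ ⦃x1 x2 z1 z2 : X⦄, inA x1 → inA x2 → ¬ inP x1 → ¬ inP x2 →
      x1 ≤ x2 → z1 ∈ h x1 → z2 ∈ h x2 → z1 ≤ z2 := by
    intro x1 x2 z1 z2 a1 a2 p1 p2 hle hz1 hz2
    obtain ⟨y1, hy1, hzy1⟩ := hmem hz1
    obtain ⟨y2, hy2, hzy2⟩ := hmem hz2
    have hy1C : y1 ∈ g.Dom \ Yg := ⟨hgdom hzy1, fun hY => p1 ⟨y1, hy1, hY⟩⟩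
    have hy2C : y2 ∈ g.Dom \ Yg := ⟨hgdom hzy2, fun hY => p2 ⟨y2, hy2, hY⟩⟩
    exact gordC hy1C hy2C (fordY a1 a2 hle hy1 hy2) hzy1 hzy2
  have hBPord : ∀ ⦃x1 x2 z1 z2 : X⦄, ¬ inA x1 → ¬ inA x2 → inP x1 → inP x2 →
      x1 ≤ x2 → z1 ∈ h x1 → z2 ∈ h x2 → z1 ≤ z2 := by
    intro x1 x2 z1 z2 a1 a2 p1 p2 hle hz1 hz2
    obtain ⟨y1, hy1, hzy1⟩ := hmem hz1
    obtain ⟨y2, hy2, hzy2⟩ := hmem hz2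
    obtain ⟨y1', hy1', hy1Y⟩ := p1
    obtain ⟨y2', hy2', hy2Y⟩ := p2
    rw [Part.mem_unique hy1 hy1'] at hzy1
    rw [Part.mem_unique hy2 hy2'] at hzy2
    have h1 : x1 ∈ f.Dom \ Yf := ⟨hfdom hy1, a1⟩
    have h2 : x2 ∈ f.Dom \ Yf := ⟨hfdom hy2, a2⟩
    exact gordY hy1Y hy2Y (fordC h1 h2 hle hy1' hy2') hzy1 hzy2
  have hBC : ∀ ⦃x1 x2 z1 z2 : X⦄, ¬ inA x1 → ¬ inA x2 → ¬ inP x1 → ¬ inP x2 →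
      x1 ≤ x2 → z1 ∈ h x1 → z2 ∈ h x2 → z1 ≤ z2 := by
    intro x1 x2 z1 z2 a1 a2 p1 p2 hle hz1 hz2
    obtain ⟨y1, hy1, hzy1⟩ := hmem hz1
    obtain ⟨y2, hy2, hzy2⟩ := hmem hz2
    have hy1C : y1 ∈ g.Dom \ Yg := ⟨hgdom hzy1, fun hY => p1 ⟨y1, hy1, hY⟩⟩
    have hy2C : y2 ∈ g.Dom \ Yg := ⟨hgdom hzy2, fun hY => p2 ⟨y2, hy2, hY⟩⟩
    have h1 : x1 ∈ f.Dom \ Yf := ⟨hfdom hy1, a1⟩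
    have h2 : x2 ∈ f.Dom \ Yf := ⟨hfdom hy2, a2⟩
    exact gordC hy1C hy2C (fordC h1 h2 hle hy1 hy2) hzy1 hzy2
  -- domain comparison between Yf-part and its complement
  have hdomAB : ∀ ⦃x1 x2 y1 y2 : X⦄, inA x1 → ¬ inA x2 → y1 ∈ f x1 → y2 ∈ f x2 →
      x1 ≤ x2 ∧ y2 ≤ y1 := fun x1 x2 y1 y2 a1 a2 hy1 hy2 =>
    fcross a1 ⟨hfdom hy2, a2⟩ hy1 hy2
  -- value comparison: values whose f-image is in Yg dominate the others
  have hPC : ∀ ⦃x1 x2 z1 z2 : X⦄, inP x1 → ¬ inP x2 → z1 ∈ h x1 → z2 ∈ h x2 →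
      z2 ≤ z1 := by
    intro x1 x2 z1 z2 p1 p2 hz1 hz2
    obtain ⟨y1, hy1, hzy1⟩ := hmem hz1
    obtain ⟨y2, hy2, hzy2⟩ := hmem hz2
    obtain ⟨y1', hy1', hy1Y⟩ := p1
    rw [Part.mem_unique hy1 hy1'] at hzy1
    have hy2C : y2 ∈ g.Dom \ Yg := ⟨hgdom hzy2, fun hY => p2 ⟨y2, hy2, hY⟩⟩
    exact (gcross hy1Y hy2C hzy1 hzy2).2
  -- value comparison between A and B within the same g-block
  have hABP : ∀ ⦃x1 x2 z1 z2 : X⦄, inA x1 → ¬ inA x2 → inP x1 → inP x2 →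
      z1 ∈ h x1 → z2 ∈ h x2 → z2 ≤ z1 := by
    intro x1 x2 z1 z2 a1 a2 p1 p2 hz1 hz2
    obtain ⟨y1, hy1, hzy1⟩ := hmem hz1
    obtain ⟨y2, hy2, hzy2⟩ := hmem hz2
    obtain ⟨y1', hy1', hy1Y⟩ := p1
    obtain ⟨y2', hy2', hy2Y⟩ := p2
    rw [Part.mem_unique hy1 hy1'] at hzy1
    rw [Part.mem_unique hy2 hy2'] at hzy2
    exact gordY hy2Y hy1Y (hdomAB a1 a2 hy1' hy2').2 hzy2 hzy1
  have hABC : ∀ ⦃x1 x2 z1 z2 : X⦄, inA x1 → ¬ inA x2 → ¬ inP x1 → ¬ inP x2 →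
      z1 ∈ h x1 → z2 ∈ h x2 → z2 ≤ z1 := by
    intro x1 x2 z1 z2 a1 a2 p1 p2 hz1 hz2
    obtain ⟨y1, hy1, hzy1⟩ := hmem hz1
    obtain ⟨y2, hy2, hzy2⟩ := hmem hz2
    have hy1C : y1 ∈ g.Dom \ Yg := ⟨hgdom hzy1, fun hY => p1 ⟨y1, hy1, hY⟩⟩
    have hy2C : y2 ∈ g.Dom \ Yg := ⟨hgdom hzy2, fun hY => p2 ⟨y2, hy2, hY⟩⟩
    exact gordC hy2C hy1C (hdomAB a1 a2 hy1 hy2).2 hzy2 hzy1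
  -- exclusion : A∩P and B∩Pᶜ cannot both meet the domain
  have hexcl : ∀ ⦃x1 x2 : X⦄, x1 ∈ h.Dom → x2 ∈ h.Dom → inA x1 → inP x1 →
      ¬ inA x2 → ¬ inP x2 → False := by
    intro x1 x2 h1 h2 a1 p1 a2 p2
    obtain ⟨y1, z1, hy1, hzy1, _⟩ := hdom h1
    obtain ⟨y2, z2, hy2, hzy2, _⟩ := hdom h2
    obtain ⟨y1', hy1', hy1Y⟩ := p1
    rw [Part.mem_unique hy1 hy1'] at hzy1
    have hy2C : y2 ∈ g.Dom \ Yg := ⟨hgdom hzy2, fun hY => p2 ⟨y2, hy2, hY⟩⟩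
    have h21 : y2 ≤ y1' := (hdomAB a1 a2 hy1' hy2).2
    have h12 : y1' ≤ y2 := (gcross hy1Y hy2C hzy1 hzy2).1
    have : y1' = y2 := le_antisymm h12 h21
    rw [this] at hy1Y
    exact hy2C.2 hy1Y
  -- in the B-part, the P-values come first
  have hdomPB : ∀ ⦃x1 x2 : X⦄, x1 ∈ h.Dom → x2 ∈ h.Dom → ¬ inA x1 → ¬ inA x2 →
      inP x1 → ¬ inP x2 → x1 ≤ x2 := by
    intro x1 x2 h1 h2 a1 a2 p1 p2
    by_contra hnot
    have hle : x2 ≤ x1 := (not_le.mp hnot).le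
    obtain ⟨y1, z1, hy1, hzy1, _⟩ := hdom h1
    obtain ⟨y2, z2, hy2, hzy2, _⟩ := hdom h2
    obtain ⟨y1', hy1', hy1Y⟩ := p1
    rw [Part.mem_unique hy1 hy1'] at hzy1
    have hy2C : y2 ∈ g.Dom \ Yg := ⟨hgdom hzy2, fun hY => p2 ⟨y2, hy2, hY⟩⟩
    have h21 : y2 ≤ y1' := fordC ⟨hfdom hy2, a2⟩ ⟨hfdom hy1', a1⟩ hle hy2 hy1'
    have h12 : y1' ≤ y2 := (gcross hy1Y hy2C hzy1 hzy2).1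
    have : y1' = y2 := le_antisymm h12 h21
    rw [this] at hy1Y
    exact hy2C.2 hy1Y
  -- in the A-part, the P-values come first
  have hdomPA : ∀ ⦃x1 x2 : X⦄, x1 ∈ h.Dom → x2 ∈ h.Dom → inA x1 → inA x2 →
      inP x1 → ¬ inP x2 → x1 ≤ x2 := by
    intro x1 x2 h1 h2 a1 a2 p1 p2
    by_contra hnot
    have hle : x2 ≤ x1 := (not_le.mp hnot).le
    obtain ⟨y1, z1, hy1, hzy1, _⟩ := hdom h1
    obtain ⟨y2, z2, hy2, hzy2, _⟩ := hdom h2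
    obtain ⟨y1', hy1', hy1Y⟩ := p1
    rw [Part.mem_unique hy1 hy1'] at hzy1
    have hy2C : y2 ∈ g.Dom \ Yg := ⟨hgdom hzy2, fun hY => p2 ⟨y2, hy2, hY⟩⟩
    have h21 : y2 ≤ y1' := fordY a2 a1 hle hy2 hy1'
    have h12 : y1' ≤ y2 := (gcross hy1Y hy2C hzy1 hzy2).1
    have : y1' = y2 := le_antisymm h12 h21
    rw [this] at hy1Y
    exact hy2C.2 hy1Y
  by_cases hA1 : {x | x ∈ h.Dom ∧ inA x ∧ inP x}.Nonempty
  · -- ideal Z = A ∩ P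
    obtain ⟨x0, hx0⟩ := hA1
    -- classification of the complement
    have hclass : ∀ ⦃x : X⦄, x ∈ h.Dom \ {x | x ∈ h.Dom ∧ inA x ∧ inP x} →
        (inA x ∧ ¬ inP x) ∨ (¬ inA x ∧ inP x) := by
      intro x hx
      by_cases ha : inA x
      · left
        exact ⟨ha, fun hp => hx.2 ⟨hx.1, ha, hp⟩⟩
      · right
        refine ⟨ha, ?_⟩
        by_contra hp
        exact hexcl hx0.1 hx.1 hx0.2.1 hx0.2.2 ha hp
    refine ⟨_, ⟨x0, hx0⟩, fun x hx => hx.1, ?_, ?_, ?_⟩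
    · intro x1 x2 z1 z2 h1 h2 hle hz1 hz2
      exact hAA h1.2.1 h2.2.1 h1.2.2 h2.2.2 hle hz1 hz2
    · intro x1 x2 z1 z2 h1 h2 hle hz1 hz2
      rcases hclass h1 with ⟨a1, p1⟩ | ⟨a1, p1⟩ <;>
        rcases hclass h2 with ⟨a2, p2⟩ | ⟨a2, p2⟩
      · exact hCC a1 a2 p1 p2 hle hz1 hz2
      · exact hPC p2 p1 hz2 hz1
      · -- x1 in B∩P, x2 in A∩Pᶜ with x1 ≤ x2 : impossible
        exfalso
        obtain ⟨y1, z1', hy1, -, -⟩ := hdom h1.1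
        obtain ⟨y2, z2', hy2, -, -⟩ := hdom h2.1
        have hx21 : x2 ≤ x1 := (hdomAB a2 a1 hy2 hy1).1
        have heq : x1 = x2 := le_antisymm hle hx21
        rw [heq] at p1
        exact p2 p1
      · exact hBPord a1 a2 p1 p2 hle hz1 hz2
    · intro a b u v ha hb hu hv
      rcases hclass hb with ⟨a2, p2⟩ | ⟨a2, p2⟩
      · exact ⟨hdomPA ha.1 hb.1 ha.2.1 a2 ha.2.2 p2, hPC ha.2.2 p2 hu hv⟩
      · obtain ⟨y1, z1', hy1, -, -⟩ := hdom ha.1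
        obtain ⟨y2, z2', hy2, -, -⟩ := hdom hb.1
        exact ⟨(hdomAB ha.2.1 a2 hy1 hy2).1, hABP ha.2.1 a2 ha.2.2 p2 hu hv⟩
  · -- A ∩ P empty
    have hAnotP : ∀ ⦃x : X⦄, x ∈ h.Dom → inA x → ¬ inP x := by
      intro x hx ha hp
      exact hA1 ⟨x, hx, ha, hp⟩
    by_cases hZ2 : {x | x ∈ h.Dom ∧ (inA x ∨ inP x)}.Nonempty
    · have hclass : ∀ ⦃x : X⦄, x ∈ {x | x ∈ h.Dom ∧ (inA x ∨ inP x)} →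
          (inA x ∧ ¬ inP x) ∨ (¬ inA x ∧ inP x) := by
        intro x hx
        rcases hx.2 with ha | hp
        · exact Or.inl ⟨ha, hAnotP hx.1 ha⟩
        · refine Or.inr ⟨?_, hp⟩
          intro ha
          exact hAnotP hx.1 ha hp
      refine ⟨_, hZ2, fun x hx => hx.1, ?_, ?_, ?_⟩
      · intro x1 x2 z1 z2 h1 h2 hle hz1 hz2
        rcases hclass h1 with ⟨a1, p1⟩ | ⟨a1, p1⟩ <;>
          rcases hclass h2 with ⟨a2, p2⟩ | ⟨a2, p2⟩
        · exact hCC a1 a2 p1 p2 hle hz1 hz2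
        · exact hPC p2 p1 hz2 hz1
        · exfalso
          obtain ⟨y1, z1', hy1, -, -⟩ := hdom h1.1
          obtain ⟨y2, z2', hy2, -, -⟩ := hdom h2.1
          have hx21 : x2 ≤ x1 := (hdomAB a2 a1 hy2 hy1).1
          have heq : x1 = x2 := le_antisymm hle hx21
          rw [heq] at p1
          exact p2 p1
        · exact hBPord a1 a2 p1 p2 hle hz1 hz2
      · intro x1 x2 z1 z2 h1 h2 hle hz1 hz2
        have b1 : ¬ inA x1 ∧ ¬ inP x1 := by
          constructor
          · intro ha; exact h1.2 ⟨h1.1, Or.inl ha⟩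
          · intro hp; exact h1.2 ⟨h1.1, Or.inr hp⟩
        have b2 : ¬ inA x2 ∧ ¬ inP x2 := by
          constructor
          · intro ha; exact h2.2 ⟨h2.1, Or.inl ha⟩
          · intro hp; exact h2.2 ⟨h2.1, Or.inr hp⟩
        exact hBC b1.1 b2.1 b1.2 b2.2 hle hz1 hz2
      · intro a b u v ha hb hu hv
        have b2 : ¬ inA b ∧ ¬ inP b := by
          constructor
          · intro h'; exact hb.2 ⟨hb.1, Or.inl h'⟩
          · intro h'; exact hb.2 ⟨hb.1, Or.inr h'⟩
        rcases hclass ha with ⟨a1, p1⟩ | ⟨a1, p1⟩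
        · obtain ⟨y1, z1', hy1, -, -⟩ := hdom ha.1
          obtain ⟨y2, z2', hy2, -, -⟩ := hdom hb.1
          exact ⟨(hdomAB a1 b2.1 hy1 hy2).1, hABC a1 b2.1 p1 b2.2 hu hv⟩
        · exact ⟨hdomPB ha.1 hb.1 a1 b2.1 p1 b2.2, hPC p1 b2.2 hu hv⟩
    · -- everything in the domain lies in B ∩ Pᶜ
      have hall : ∀ ⦃x : X⦄, x ∈ h.Dom → ¬ inA x ∧ ¬ inP x := by
        intro x hx
        constructor
        · intro ha; exact hZ2 ⟨x, hx, Or.inl ha⟩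
        · intro hp; exact hZ2 ⟨x, hx, Or.inr hp⟩
      refine ⟨h.Dom, hDne, subset_rfl, ?_, ?_, ?_⟩
      · intro x1 x2 z1 z2 h1 h2 hle hz1 hz2
        exact hBC (hall h1).1 (hall h2).1 (hall h1).2 (hall h2).2 hle hz1 hz2
      · intro x1 x2 z1 z2 h1 _ _ _ _
        exact absurd h1.1 h1.2
      · intro a b u v _ hb _ _
        exact absurd hb.1 hb.2

/-- Partial inverse of a partial transformation: defined on the range, choosing a preimage. -/
noncomputable def pinv (f : X →. X) : X →. X := fun y =>
  ⟨∃ x, y ∈ f x, fun h => Classical.choose h⟩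

lemma mem_pinv {f : X →. X} {y x : X} (h : x ∈ pinv f y) : y ∈ f x := by
  obtain ⟨hd, rfl⟩ := Part.mem_mk_iff.1 h
  exact Classical.choose_spec hd

lemma mem_pinv_of {f : X →. X} {x y : X}
    (hinj : ∀ ⦃a b u : X⦄, u ∈ f a → u ∈ f b → a = b) (h : y ∈ f x) :
    x ∈ pinv f y := by
  have hd : ∃ a, y ∈ f a := ⟨x, h⟩
  exact Part.mem_mk_iff.2 ⟨hd, hinj (Classical.choose_spec hd) h⟩

lemma pinv_get {f : X →. X} {x y : X} (h : y ∈ f x) :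
    ∃ v, v ∈ pinv f y := by
  have hd : ∃ x, y ∈ f x := ⟨x, h⟩
  exact ⟨Classical.choose hd, Part.mem_mk_iff.2 ⟨hd, rfl⟩⟩

lemma isOP_pinv [LinearOrder X] {f : X →. X} (hf : IsOP f) : IsOP (pinv f) :=
  isOP_of_subinv hf fun _ _ h => mem_pinv h

/-- Green's relation `J` in `POP(X)`: `α J β` (i.e. `α = λβγ` and `β = δαξ` for some
`λ, γ, δ, ξ ∈ POP(X)`, left factor applied first) iff there exist injective
orientation-preserving partial transformations `θ` and `τ` with `Dom θ = Im α`,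
`θ(Im α) ⊆ Im β`, `Dom τ = Im β` and `τ(Im β) ⊆ Im α`. -/
theorem stmt18 (X : Type*) [LinearOrder X] (α β : X →. X)
    (hα : IsOP α) (hβ : IsOP β) :
    ((∃ l g : X →. X, IsOP l ∧ IsOP g ∧ α = g.comp (β.comp l)) ∧
     (∃ d e : X →. X, IsOP d ∧ IsOP e ∧ β = e.comp (α.comp d))) ↔
    ((∃ θ : X →. X, IsOP θ ∧ (∀ ⦃x y u : X⦄, u ∈ θ x → u ∈ θ y → x = y) ∧
        θ.Dom = α.ran ∧ θ.ran ⊆ β.ran) ∧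
     (∃ τ : X →. X, IsOP τ ∧ (∀ ⦃x y u : X⦄, u ∈ τ x → u ∈ τ y → x = y) ∧
        τ.Dom = β.ran ∧ τ.ran ⊆ α.ran)) := by
  constructor
  · rintro ⟨⟨l, g, hl, hg, hαeq⟩, ⟨d, e, hd, he, hβeq⟩⟩
    constructor
    · have key : ∀ ⦃y : X⦄, y ∈ α.ran → ∃ x, x ∈ β.ran ∧ y ∈ g x := by
        intro y hy
        obtain ⟨a, ha⟩ := hy
        rw [hαeq] at ha
        obtain ⟨b, hb, hyb⟩ := mem_pcomp.1 ha
        obtain ⟨c, hc, hbc⟩ := mem_pcomp.1 hb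
        exact ⟨b, ⟨c, hbc⟩, hyb⟩
      refine ⟨fun y => ⟨y ∈ α.ran, fun h => (key h).choose⟩, ?_, ?_, ?_, ?_⟩
      · apply isOP_of_subinv hg
        intro y x hx
        obtain ⟨hd', rfl⟩ := Part.mem_mk_iff.1 hx
        exact (key hd').choose_spec.2
      · intro x y u hux huy
        obtain ⟨hdx, rfl⟩ := Part.mem_mk_iff.1 hux
        obtain ⟨hdy, he'⟩ := Part.mem_mk_iff.1 huy
        have h1 : x ∈ g ((key hdx).choose) := (key hdx).choose_spec.2
        have h2 : y ∈ g ((key hdy).choose) := (key hdy).choose_spec.2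
        rw [he'] at h2
        exact Part.mem_unique h1 h2
      · rfl
      · rintro u ⟨y, hy⟩
        obtain ⟨hd', rfl⟩ := Part.mem_mk_iff.1 hy
        exact (key hd').choose_spec.1
    · have key : ∀ ⦃y : X⦄, y ∈ β.ran → ∃ x, x ∈ α.ran ∧ y ∈ e x := by
        intro y hy
        obtain ⟨a, ha⟩ := hy
        rw [hβeq] at ha
        obtain ⟨b, hb, hyb⟩ := mem_pcomp.1 ha
        obtain ⟨c, hc, hbc⟩ := mem_pcomp.1 hb
        exact ⟨b, ⟨c, hbc⟩, hyb⟩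
      refine ⟨fun y => ⟨y ∈ β.ran, fun h => (key h).choose⟩, ?_, ?_, ?_, ?_⟩
      · apply isOP_of_subinv he
        intro y x hx
        obtain ⟨hd', rfl⟩ := Part.mem_mk_iff.1 hx
        exact (key hd').choose_spec.2
      · intro x y u hux huy
        obtain ⟨hdx, rfl⟩ := Part.mem_mk_iff.1 hux
        obtain ⟨hdy, he'⟩ := Part.mem_mk_iff.1 huy
        have h1 : x ∈ e ((key hdx).choose) := (key hdx).choose_spec.2
        have h2 : y ∈ e ((key hdy).choose) := (key hdy).choose_spec.2
        rw [he'] at h2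
        exact Part.mem_unique h1 h2
      · rfl
      · rintro u ⟨y, hy⟩
        obtain ⟨hd', rfl⟩ := Part.mem_mk_iff.1 hy
        exact (key hd').choose_spec.1
  · rintro ⟨⟨θ, hθ, injθ, hθdom, hθran⟩, ⟨τ, hτ, injτ, hτdom, hτran⟩⟩
    constructor
    · refine ⟨(pinv β).comp (θ.comp α), pinv θ,
        isOP_comp (isOP_comp hα hθ) (isOP_pinv hβ), isOP_pinv hθ, ?_⟩
      funext x
      apply Part.ext
      intro z
      constructor
      · intro hz
        have hzdom : z ∈ θ.Dom := by
          rw [hθdom]; exact ⟨x, hz⟩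
        obtain ⟨t, ht⟩ := (PFun.mem_dom θ z).1 hzdom
        have htβ : t ∈ β.ran := hθran ⟨z, ht⟩
        obtain ⟨a, ha⟩ := htβ
        obtain ⟨v, hv⟩ := pinv_get ha
        have htv : t ∈ β v := mem_pinv hv
        exact mem_pcomp.2 ⟨t, mem_pcomp.2 ⟨v, mem_pcomp.2 ⟨t,
          mem_pcomp.2 ⟨z, hz, ht⟩, hv⟩, htv⟩, mem_pinv_of injθ ht⟩
      · intro hz
        obtain ⟨w, hw, hzw⟩ := mem_pcomp.1 hz
        obtain ⟨v, hv, hwv⟩ := mem_pcomp.1 hw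
        obtain ⟨t, ht, hvt⟩ := mem_pcomp.1 hv
        obtain ⟨z1, hz1, htz1⟩ := mem_pcomp.1 ht
        have htβ : t ∈ β v := mem_pinv hvt
        have hwt : w = t := Part.mem_unique hwv htβ
        subst hwt
        have hwθ : w ∈ θ z := mem_pinv hzw
        rw [injθ hwθ htz1]
        exact hz1
    · refine ⟨(pinv α).comp (τ.comp β), pinv τ,
        isOP_comp (isOP_comp hβ hτ) (isOP_pinv hα), isOP_pinv hτ, ?_⟩
      funext x
      apply Part.ext
      intro z
      constructor
      · intro hz
        have hzdom : z ∈ τ.Dom := by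
          rw [hτdom]; exact ⟨x, hz⟩
        obtain ⟨t, ht⟩ := (PFun.mem_dom τ z).1 hzdom
        have htα : t ∈ α.ran := hτran ⟨z, ht⟩
        obtain ⟨a, ha⟩ := htα
        obtain ⟨v, hv⟩ := pinv_get ha
        have htv : t ∈ α v := mem_pinv hv
        exact mem_pcomp.2 ⟨t, mem_pcomp.2 ⟨v, mem_pcomp.2 ⟨t,
          mem_pcomp.2 ⟨z, hz, ht⟩, hv⟩, htv⟩, mem_pinv_of injτ ht⟩
      · intro hz
        obtain ⟨w, hw, hzw⟩ := mem_pcomp.1 hz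
        obtain ⟨v, hv, hwv⟩ := mem_pcomp.1 hw
        obtain ⟨t, ht, hvt⟩ := mem_pcomp.1 hv
        obtain ⟨z1, hz1, htz1⟩ := mem_pcomp.1 ht
        have htα : t ∈ α v := mem_pinv hvt
        have hwt : w = t := Part.mem_unique hwv htα
        subst hwt
        have hwτ : w ∈ τ z := mem_pinv hzw
        rw [injτ hwτ htz1]
        exact hz1
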